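/- Let 0 → A → B → C → 0 be a central extension of groups with continuous action of a profinite group Γ (A central in B, all maps Γ-equivariant). Let H ⊴ Γ be an open normal subgroup with Δ = Γ/H finite of order prime to the order of every element of A (A a finite abelian p-group, p ∤ #Δ). Suppose the restriction maps H¹(Γ, A) → H¹(H, A)^Δ and H¹(Γ, C) → H¹(H, C)^Δ are bijections and H²(Γ, A) → H²(H, A) is injective. Then the restriction map of non-abelian cohomology pointed sets H¹(Γ, B) → H¹(H, B)^Δ is a bijection. -/

import Mathlib

set_option maxHeartbeats 1000000


section Defs

variable {Γ B : Type*} [Group Γ] [Group B] [MulDistribMulAction Γ B]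

/-- A (possibly non-abelian) 1-cocycle of `Γ` valued in `B`. -/
def IsCocycle (c : Γ → B) : Prop := ∀ g h : Γ, c (g * h) = c g * g • c h

/-- Cohomologous 1-cocycles (twisted conjugation). -/
def Cohomologous (c c' : Γ → B) : Prop := ∃ b : B, ∀ g : Γ, c' g = b⁻¹ * c g * g • b

/-- A 1-cocycle of a subgroup `H ≤ Γ` valued in `B` (action restricted from `Γ`). -/
def IsCocycleOn (H : Subgroup Γ) (c : H → B) : Prop :=
  ∀ g h : H, c (g * h) = c g * (g : Γ) • c h

/-- Cohomologous 1-cocycles on a subgroup. -/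
def CohomologousOn (H : Subgroup Γ) (c c' : H → B) : Prop :=
  ∃ b : B, ∀ g : H, c' g = b⁻¹ * c g * (g : Γ) • b

/-- The class of a cocycle on a normal subgroup `H` is invariant under `Δ = Γ/H`. -/
def DeltaInvariant (H : Subgroup Γ) [H.Normal] (c : H → B) : Prop :=
  ∀ γ : Γ, CohomologousOn H
    (fun h : H => γ • c ⟨γ⁻¹ * (h : Γ) * γ, by
      simpa using (inferInstance : H.Normal).conj_mem (h : Γ) h.2 γ⁻¹⟩) c

/-- A 2-cocycle of `Γ` valued in a `Γ`-group `A` (written multiplicatively; used for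
abelian `A`). -/
def Is2Cocycle (f : Γ → Γ → B) : Prop :=
  ∀ g h j : Γ, g • f h j * f g (h * j) = f (g * h) j * f g h

/-- A 2-coboundary of `Γ` valued in `B`. -/
def Is2Coboundary (f : Γ → Γ → B) : Prop :=
  ∃ u : Γ → B, ∀ g h : Γ, f g h = u g * g • u h * (u (g * h))⁻¹

/-- A 2-coboundary of a subgroup `H ≤ Γ`. -/
def Is2CoboundaryOn (H : Subgroup Γ) (f : H → H → B) : Prop :=
  ∃ u : H → B, ∀ g h : H, f g h = u g * (g : Γ) • u h * (u (g * h))⁻¹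

end Defs

namespace MyAux

variable {Γ A B : Type*} [Group Γ] [Group B] [MulDistribMulAction Γ B]

theorem phi_mul (V M N m n : B)
    (hm : ∀ x : B, (m⁻¹ * V * M * V⁻¹) * x = x * (m⁻¹ * V * M * V⁻¹)) :
    (m * n)⁻¹ * V * (M * N) * V⁻¹ = (m⁻¹ * V * M * V⁻¹) * (n⁻¹ * V * N * V⁻¹) := by
  calc (m * n)⁻¹ * V * (M * N) * V⁻¹
      = n⁻¹ * ((m⁻¹ * V * M * V⁻¹) * (V * N * V⁻¹)) := by group
    _ = (n⁻¹ * (m⁻¹ * V * M * V⁻¹)) * (V * N * V⁻¹) := by group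
    _ = ((m⁻¹ * V * M * V⁻¹) * n⁻¹) * (V * N * V⁻¹) := by rw [← hm n⁻¹]
    _ = (m⁻¹ * V * M * V⁻¹) * (n⁻¹ * V * N * V⁻¹) := by group

theorem central_collect (zg zh Eg Eh : B) (hz : ∀ x : B, zh * x = x * zh) :
    (zg * Eg) * (zh * Eh) * (Eg * Eh)⁻¹ = zg * zh := by
  calc (zg * Eg) * (zh * Eh) * (Eg * Eh)⁻¹ = zg * ((Eg * zh) * (Eh * Eh⁻¹ * Eg⁻¹)) := by group
    _ = zg * ((zh * Eg) * (Eh * Eh⁻¹ * Eg⁻¹)) := by rw [← hz Eg]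
    _ = zg * zh := by group

theorem cocycle_conj {c : Γ → B} (hc : IsCocycle c) (g h : Γ) :
    g • c (g⁻¹ * h * g) = (c g)⁻¹ * (c h * h • c g) := by
  have h1 := hc h g
  have h2 := hc g (g⁻¹ * h * g)
  rw [show g * (g⁻¹ * h * g) = h * g by group, h1] at h2
  exact eq_inv_mul_iff_mul_eq.mpr h2.symm

theorem cocycleOn_conj {H : Subgroup Γ} {c : H → B} (hc : IsCocycleOn H c) (g h : H) :
    (g : Γ) • c (g⁻¹ * h * g) = (c g)⁻¹ * (c h * (h : Γ) • c g) := by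
  have h1 := hc h g
  have h2 := hc g (g⁻¹ * h * g)
  rw [show g * (g⁻¹ * h * g) = h * g by group, h1] at h2
  exact eq_inv_mul_iff_mul_eq.mpr h2.symm

variable [CommGroup A]

omit [MulDistribMulAction Γ B] in
theorem phi_list {H : Subgroup Γ} [MulDistribMulAction Γ B] (ι : A →* B)
    (hcent : ∀ (a : A) (x : B), ι a * x = x * ι a) (v : H → B) :
    ∀ (l : List (B × (H → A))),
      (∀ nf ∈ l, ∀ h : H, (nf.1)⁻¹ * v h * ((h : Γ) • nf.1) * (v h)⁻¹ = ι (nf.2 h)) →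
      ∀ h : H, ((l.map Prod.fst).prod)⁻¹ * v h * ((h : Γ) • (l.map Prod.fst).prod) * (v h)⁻¹
        = ι ((l.map (fun nf => nf.2 h)).prod)
  | [], _, h => by simp
  | nf :: l, hl, h => by
    have hn := hl nf List.mem_cons_self
    have hrest := phi_list ι hcent v l (fun m hm => hl m (List.mem_cons_of_mem nf hm)) h
    rw [List.map_cons, List.prod_cons, List.map_cons, List.prod_cons, map_mul, ← hn h,
      ← hrest, smul_mul']
    exact phi_mul (v h) ((h : Γ) • nf.1) ((h : Γ) • (l.map Prod.fst).prod) nf.1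
      (l.map Prod.fst).prod (fun x => by rw [hn h]; exact hcent _ x)

omit [Group B] [MulDistribMulAction Γ B] in
theorem listcob [MulDistribMulAction Γ A] (g : Γ) (x : A) (aa : Γ → A) :
    ∀ l : List Γ, (l.map (fun γ => x * ((aa γ)⁻¹ * g • aa γ))).prod
      = x ^ l.length * (((l.map aa).prod)⁻¹ * g • (l.map aa).prod)
  | [] => by simp
  | γ :: l => by
    rw [List.map_cons, List.prod_cons, listcob g x aa l, List.map_cons, List.prod_cons,
      List.length_cons, smul_mul', mul_inv, pow_succ]
    ac_rfl

omit [Group B] [MulDistribMulAction Γ B] in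
theorem list_mul_const {xi : Type*} (f : xi -> A) (y : A) :
    forall l : List xi, (l.map (fun z => f z * y)).prod = (l.map f).prod * y ^ l.length
  | [] => by simp
  | z :: l => by
    rw [List.map_cons, List.prod_cons, list_mul_const f y l, List.map_cons, List.prod_cons,
      List.length_cons, pow_succ]
    ac_rfl

end MyAux

/-- Non-abelian inflation–restriction.  Let `0 → A → B → C → 0` be a central extension of
`Γ`-groups, `H ⊴ Γ` with `Δ = Γ/H` finite of order prime to `p` and `A` a finite abelian
`p`-group.  If restriction is bijective on `H¹(−, A)` and `H¹(−, C)` (onto `Δ`-invariants)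
and injective on `H²(−, A)`, then the restriction map of pointed sets
`H¹(Γ, B) → H¹(H, B)^Δ` is a bijection (stated here at the level of cocycles:
injectivity and surjectivity on cohomology classes). -/
theorem stmt12 {p : ℕ} (hp : p.Prime) {Γ A B C : Type*} [Group Γ]
    [CommGroup A] [Group B] [CommGroup C]
    [MulDistribMulAction Γ A] [MulDistribMulAction Γ B] [MulDistribMulAction Γ C]
    [Finite A] (hA : IsPGroup p A)
    (H : Subgroup Γ) [H.Normal] (hidx0 : H.index ≠ 0) (hidx : ¬ p ∣ H.index)
    (ι : A →* B) (π : B →* C)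
    (hinj : Function.Injective ι) (hsurj : Function.Surjective π)
    (hexact : ι.range = π.ker)
    (hcentral : ∀ a : A, ι a ∈ Subgroup.center B)
    (hιequiv : ∀ (γ : Γ) (a : A), ι (γ • a) = γ • ι a)
    (hπequiv : ∀ (γ : Γ) (b : B), π (γ • b) = γ • π b)
    -- restriction is bijective on H¹(−, A):
    (hA1inj : ∀ c c' : Γ → A, IsCocycle c → IsCocycle c' →
      CohomologousOn H (fun h : H => c h) (fun h : H => c' h) → Cohomologous c c')
    (hA1surj : ∀ c : H → A, IsCocycleOn H c → DeltaInvariant H c →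
      ∃ b : Γ → A, IsCocycle b ∧ CohomologousOn H (fun h : H => b h) c)
    -- restriction is bijective on H¹(−, C):
    (hC1inj : ∀ c c' : Γ → C, IsCocycle c → IsCocycle c' →
      CohomologousOn H (fun h : H => c h) (fun h : H => c' h) → Cohomologous c c')
    (hC1surj : ∀ c : H → C, IsCocycleOn H c → DeltaInvariant H c →
      ∃ b : Γ → C, IsCocycle b ∧ CohomologousOn H (fun h : H => b h) c)
    -- restriction is injective on H²(−, A):
    (hA2 : ∀ f : Γ → Γ → A, Is2Cocycle f →
      Is2CoboundaryOn H (fun g h : H => f g h) → Is2Coboundary f) :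
    (∀ c c' : Γ → B, IsCocycle c → IsCocycle c' →
      CohomologousOn H (fun h : H => c h) (fun h : H => c' h) → Cohomologous c c') ∧
    (∀ c : H → B, IsCocycleOn H c → DeltaInvariant H c →
      ∃ b : Γ → B, IsCocycle b ∧ CohomologousOn H (fun h : H => b h) c) := by
  -- generic helpers
  have hcent : ∀ (α : A) (y : B), ι α * y = y * ι α := fun α y =>
    ((Subgroup.mem_center_iff.mp (hcentral α)) y).symm
  have hπι : ∀ α : A, π (ι α) = 1 := by
    intro α
    have h1 : ι α ∈ π.ker := by rw [← hexact]; exact ⟨α, rfl⟩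
    exact MonoidHom.mem_ker.mp h1
  have hlift : ∀ x : B, π x = 1 → ∃ α : A, ι α = x := by
    intro x hx
    have h1 : x ∈ π.ker := MonoidHom.mem_ker.mpr hx
    rw [← hexact] at h1
    exact h1
  -- the exponent inverse
  haveI := Fact.mk hp
  obtain ⟨k, hk⟩ := hA.exists_card_eq
  have hcop : Nat.Coprime H.index (Nat.card A) := by
    rw [hk]
    exact Nat.Coprime.pow_right _ ((hp.coprime_iff_not_dvd.mpr hidx).symm)
  obtain ⟨N', hNN'⟩ : ∃ N', ∀ α : A, α ^ (H.index * N') = α := by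
    rcases Nat.lt_or_ge (Nat.card A) 2 with hsmall | hbig
    · have h1 : Nat.card A = 1 := by
        have := Nat.card_pos (α := A); omega
      have hsub : Subsingleton A := Nat.card_eq_one_iff_unique.mp h1 |>.1
      exact ⟨1, fun α => Subsingleton.elim _ _⟩
    · obtain ⟨m, -, hm⟩ := Nat.exists_mul_mod_eq_one_of_coprime hcop hbig
      refine ⟨m, fun α => ?_⟩
      conv_lhs => rw [← Nat.div_add_mod (H.index * m) (Nat.card A)]
      rw [pow_add, pow_mul, pow_card_eq_one', one_pow, one_mul, hm, pow_one]
  -- finiteness of the quotient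
  haveI hfinq : Finite (Γ ⧸ H) := Nat.finite_of_card_ne_zero hidx0
  haveI := Fintype.ofFinite (Γ ⧸ H)
  have hidxcard : H.index = Fintype.card (Γ ⧸ H) := by
    rw [Subgroup.index_eq_card, Nat.card_eq_fintype_card]
  refine ⟨?_, ?_⟩
  · intro c c' hc hc' hcoh
    obtain ⟨b₀, hb₀⟩ := hcoh
    have hb₀' : ∀ h : H, c' h = b₀⁻¹ * c h * (h : Γ) • b₀ := fun h => hb₀ h
    -- push to C
    have hπc : IsCocycle (fun g => π (c g)) := by
      intro g h; simp only [hc g h, map_mul, hπequiv]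
    have hπc' : IsCocycle (fun g => π (c' g)) := by
      intro g h; simp only [hc' g h, map_mul, hπequiv]
    obtain ⟨xC, hxC⟩ := hC1inj _ _ hπc hπc'
      ⟨π b₀, fun h => by simp only [hb₀' h, map_mul, map_inv, hπequiv]⟩
    obtain ⟨b, hb⟩ := hsurj xC
    set e : Γ → B := fun g => b⁻¹ * c g * g • b with he_def
    have he : IsCocycle e := by
      intro g h
      simp only [he_def]
      rw [hc g h, mul_smul g h b, smul_mul', smul_mul', smul_inv']
      group
    have hπe : ∀ g, π (e g) = π (c' g) := by
      intro g
      simp only [he_def, map_mul, map_inv, hπequiv, hb]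
      exact (hxC g).symm
    choose a ha using fun g => hlift (c' g * (e g)⁻¹)
      (by rw [map_mul, map_inv, hπe]; group)
    have hc'eq : ∀ g, c' g = ι (a g) * e g := by
      intro g; rw [ha]; group
    have hacoc : IsCocycle a := by
      intro g h
      apply hinj
      rw [map_mul, ha]
      calc c' (g * h) * (e (g * h))⁻¹
          = (ι (a g) * e g) * (ι (g • a h) * g • e h) * (e g * g • e h)⁻¹ := by
            rw [hc' g h, he g h, hc'eq g, hc'eq h, smul_mul', ← hιequiv]
        _ = ι (a g) * ι (g • a h) := MyAux.central_collect _ _ _ _ (hcent _)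
    -- the element w and its image x
    set w : B := b⁻¹ * b₀ with hw_def
    have hstar : ∀ h : H, ι (a h) * e h = w⁻¹ * e h * (h : Γ) • w := by
      intro h
      rw [← hc'eq h, hb₀' h]
      simp only [he_def, hw_def]
      rw [smul_mul', smul_inv']
      group
    set x : C := π w with hx_def
    have hxH : ∀ h : H, (h : Γ) • x = x := by
      intro h
      have h1 := congrArg π (hstar h)
      simp only [map_mul, map_inv, hπι, one_mul, hπequiv, ← hx_def] at h1
      have h2 : π (e h) = π (e h) * (x⁻¹ * (h : Γ) • x) := by
        rw [← mul_assoc, mul_comm (π (e (h:Γ))) x⁻¹]; exact h1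
      have h3 := (left_eq_mul.mp h2)
      rw [inv_mul_eq_one] at h3
      exact h3.symm
    have hxcos : ∀ γ γ' : Γ, (QuotientGroup.mk γ : Γ ⧸ H) = QuotientGroup.mk γ' →
        γ • x = γ' • x := by
      intro γ γ' hq
      have hmem : γ⁻¹ * γ' ∈ H := QuotientGroup.eq.mp hq
      calc γ • x = γ • ((⟨γ⁻¹ * γ', hmem⟩ : H) : Γ) • x := by rw [hxH]
        _ = γ' • x := by rw [← mul_smul]; congr 1; group
    set z : C := ∏ q : Γ ⧸ H, (Quotient.out q) • x with hz_def
    have hzinv : ∀ g : Γ, g • z = z := by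
      intro g
      have hps : g • (∏ q : Γ ⧸ H, Quotient.out q • x) = ∏ q : Γ ⧸ H, g • (Quotient.out q • x) :=
        map_prod (MulDistribMulAction.toMonoidHom C g) _ _
      rw [hz_def, hps]
      have h1 : ∀ q : Γ ⧸ H, g • ((Quotient.out q) • x) = (Quotient.out (g • q)) • x := by
        intro q
        rw [← mul_smul]
        apply hxcos
        rw [QuotientGroup.out_eq' (g • q)]
        show g • (QuotientGroup.mk (Quotient.out q) : Γ ⧸ H) = g • q
        rw [QuotientGroup.out_eq' q]
      rw [Finset.prod_congr rfl (fun q _ => h1 q)]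
      exact Fintype.prod_equiv (MulAction.toPerm (β := Γ ⧸ H) g)
        (fun q => (Quotient.out (g • q)) • x) (fun q => (Quotient.out q) • x)
        (fun q => by rw [MulAction.toPerm_apply])
    -- the lift u of z ^ N'
    obtain ⟨u, hu⟩ := hsurj (z ^ N')
    choose a' ha' using fun g => hlift (u⁻¹ * e g * (g • u) * (e g)⁻¹)
      (by
        rw [map_mul, map_mul, map_mul, map_inv, map_inv, hπequiv, hu]
        have h1 : g • z ^ N' = z ^ N' := by rw [smul_pow', hzinv]
        rw [h1, mul_comm ((z ^ N')⁻¹) (π (e g))]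
        group)
    have ha'coc : IsCocycle a' := by
      intro g h
      apply hinj
      rw [map_mul]
      calc ι (a' (g * h)) = u⁻¹ * e (g * h) * ((g * h) • u) * (e (g * h))⁻¹ := ha' _
        _ = u⁻¹ * e g * (g • (e h * (h • u) * (e h)⁻¹)) * (e g)⁻¹ := by
            rw [he g h, mul_smul g h u]
            simp only [smul_mul', smul_inv', mul_inv_rev]
            group
        _ = u⁻¹ * e g * (g • (u * ι (a' h))) * (e g)⁻¹ := by
            rw [show e h * (h • u) * (e h)⁻¹ = u * ι (a' h) by rw [ha' h]; group]
        _ = u⁻¹ * e g * ((g • u) * (ι (g • a' h) * (e g)⁻¹)) := by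
            rw [smul_mul', ← hιequiv]; group
        _ = u⁻¹ * e g * ((g • u) * ((e g)⁻¹ * ι (g • a' h))) := by
            rw [hcent (g • a' h) ((e g)⁻¹)]
        _ = (u⁻¹ * e g * (g • u) * (e g)⁻¹) * ι (g • a' h) := by group
        _ = ι (a' g) * ι (g • a' h) := by rw [ha' g]
    -- the twisted lifts W and the key formula
    set W : Γ → B := fun g => e g * (g • w) * (e g)⁻¹ with hW_def
    have hWphi : ∀ (g : Γ) (h : H), (W g)⁻¹ * e h * ((h : Γ) • W g) * (e h)⁻¹
        = ι (a h * ((a g)⁻¹ * (h : Γ) • a g)) := by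
      intro g h
      have hH' : g⁻¹ * (h : Γ) * g ∈ H := by
        simpa using (inferInstance : H.Normal).conj_mem (h : Γ) h.2 g⁻¹
      have hs : ι (a (g⁻¹ * (h : Γ) * g)) * e (g⁻¹ * (h : Γ) * g)
          = w⁻¹ * e (g⁻¹ * (h : Γ) * g) * (g⁻¹ * (h : Γ) * g) • w := by
        simpa using hstar ⟨g⁻¹ * (h : Γ) * g, hH'⟩
      set h' : Γ := g⁻¹ * (h : Γ) * g with hh'
      have hsw : h' • w = (e h')⁻¹ * (w * ι (a h')) * e h' := by
        calc h' • w = (e h')⁻¹ * (w * (w⁻¹ * e h' * h' • w)) := by group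
          _ = (e h')⁻¹ * (w * (ι (a h') * e h')) := by rw [← hs]
          _ = (e h')⁻¹ * (w * ι (a h')) * e h' := by group
      have hsg : (h : Γ) • e g = (e h)⁻¹ * (e g * g • e h') := by
        have h1 := he (h : Γ) g
        rw [show (h : Γ) * g = g * h' by rw [hh']; group, he g h'] at h1
        calc (h : Γ) • e g = (e h)⁻¹ * (e h * (h : Γ) • e g) := by group
          _ = (e h)⁻¹ * (e g * g • e h') := by rw [← h1]
      have hsw2 : ((h : Γ) * g) • w = (g • e h')⁻¹ * ((g • w) * ι (g • a h')) * (g • e h') := by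
        rw [show (h : Γ) * g = g * h' by rw [hh']; group, mul_smul, hsw]
        simp only [smul_mul', smul_inv', ← hιequiv]
      have key : (h : Γ) • W g = ((h : Γ) • e g) * (((h : Γ) * g) • w) * ((h : Γ) • e g)⁻¹ := by
        simp only [hW_def]
        rw [smul_mul', smul_mul', smul_inv', mul_smul]
      calc (W g)⁻¹ * e h * ((h : Γ) • W g) * (e h)⁻¹
          = (W g)⁻¹ * e h * (((e h)⁻¹ * (e g * g • e h')) *
              ((g • e h')⁻¹ * ((g • w) * ι (g • a h')) * (g • e h')) *
              ((e h)⁻¹ * (e g * g • e h'))⁻¹) * (e h)⁻¹ := by rw [key, hsg, hsw2]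
        _ = e g * (ι (g • a h') * (e g)⁻¹) := by simp only [hW_def]; group
        _ = e g * ((e g)⁻¹ * ι (g • a h')) := by rw [hcent]
        _ = ι (g • a h') := by group
        _ = ι (a h * ((a g)⁻¹ * (h : Γ) • a g)) := by
            rw [hh', MyAux.cocycle_conj hacoc g (h : Γ)]
            exact congrArg ι (by ac_rfl)
    -- the transversal list
    set lG : List Γ := (Finset.univ : Finset (Γ ⧸ H)).toList.map Quotient.out with hlG_def
    set P₀ : B := (lG.map W).prod with hP0_def
    set A₀ : A := (lG.map a).prod with hA0_def
    have hlen : lG.length = H.index := by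
      rw [hlG_def, List.length_map, Finset.length_toList, Finset.card_univ, hidxcard]
      rfl
    have hπP₀ : π P₀ = z := by
      have h1 : (fun q : Γ ⧸ H => π (W (Quotient.out q))) = fun q => Quotient.out q • x := by
        funext q
        simp only [hW_def, map_mul, map_inv, hπequiv, ← hx_def]
        rw [mul_comm (π (e (Quotient.out q))) (Quotient.out q • x)]
        group
      rw [hP0_def, map_list_prod, hlG_def, List.map_map, List.map_map, hz_def,
        ← Finset.prod_map_toList]
      exact congrArg List.prod (congrArg (fun f => List.map f Finset.univ.toList)
        (funext fun q => congrFun h1 q))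
    obtain ⟨β, hβ⟩ := hlift (u * (P₀ ^ N')⁻¹)
      (by rw [map_mul, map_inv, map_pow, hπP₀, hu]; group)
    have hu2 : u = ι β * P₀ ^ N' := by rw [hβ]; group
    have hφP₀ : ∀ h : H, P₀⁻¹ * e h * ((h : Γ) • P₀) * (e h)⁻¹
        = ι ((a h) ^ H.index * (A₀⁻¹ * (h : Γ) • A₀)) := by
      intro h
      have hl := MyAux.phi_list (H := H) ι hcent (fun h : H => e h)
        (lG.map (fun γ => (W γ, fun h : H => a h * ((a γ)⁻¹ * (h : Γ) • a γ))))
        (by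
          intro nf hnf h0
          obtain ⟨γ, _, rfl⟩ := List.mem_map.mp hnf
          exact hWphi γ h0) h
      simp only [List.map_map, Function.comp_def] at hl
      calc P₀⁻¹ * e h * ((h : Γ) • P₀) * (e h)⁻¹
          = ι ((lG.map (fun γ => a h * ((a γ)⁻¹ * (h : Γ) • a γ))).prod) := hl
        _ = ι ((a h) ^ H.index * (A₀⁻¹ * (h : Γ) • A₀)) := by
            rw [MyAux.listcob ((h : Γ)) (a h) a lG, hlen, ← hA0_def]
    have hφP : ∀ h : H, (P₀ ^ N')⁻¹ * e h * ((h : Γ) • P₀ ^ N') * (e h)⁻¹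
        = ι (((a h) ^ H.index * (A₀⁻¹ * (h : Γ) • A₀)) ^ N') := by
      intro h
      have hl := MyAux.phi_list (H := H) ι hcent (fun h : H => e h)
        (List.replicate N' (P₀, fun h : H => (a h) ^ H.index * (A₀⁻¹ * (h : Γ) • A₀)))
        (by
          intro nf hnf h0
          rw [List.eq_of_mem_replicate hnf]
          exact hφP₀ h0) h
      simpa only [List.map_replicate, List.prod_replicate] using hl
    have hφβ : ∀ h : H, (ι β)⁻¹ * e h * ((h : Γ) • ι β) * (e h)⁻¹ = ι (β⁻¹ * (h : Γ) • β) := by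
      intro h
      calc (ι β)⁻¹ * e h * ((h : Γ) • ι β) * (e h)⁻¹
          = (ι β)⁻¹ * (e h * ι ((h : Γ) • β)) * (e h)⁻¹ := by rw [← hιequiv]; group
        _ = (ι β)⁻¹ * (ι ((h : Γ) • β) * e h) * (e h)⁻¹ := by rw [hcent]
        _ = (ι β)⁻¹ * ι ((h : Γ) • β) := by group
        _ = ι (β⁻¹ * (h : Γ) • β) := by rw [map_mul, map_inv]
    have ha'h : ∀ h : H, a' h = a h * ((β * A₀ ^ N')⁻¹ * (h : Γ) • (β * A₀ ^ N')) := by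
      intro h
      apply hinj
      have hsplit : ι (a' h) = ((ι β)⁻¹ * e h * ((h : Γ) • ι β) * (e h)⁻¹) *
          ((P₀ ^ N')⁻¹ * e h * ((h : Γ) • P₀ ^ N') * (e h)⁻¹) := by
        rw [ha', hu2, smul_mul']
        exact MyAux.phi_mul (e h) ((h : Γ) • ι β) ((h : Γ) • P₀ ^ N') (ι β) (P₀ ^ N')
          (fun y => by rw [hφβ h]; exact hcent _ y)
      rw [hsplit, hφβ h, hφP h, ← map_mul]
      refine congrArg ι ?_
      rw [mul_pow, ← pow_mul, hNN', mul_pow, inv_pow, smul_mul', smul_pow', mul_inv]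
      ac_rfl
    have hcohA : CohomologousOn H (fun h : H => a' h) (fun h : H => a h) := by
      refine ⟨(β * A₀ ^ N')⁻¹, fun h => ?_⟩
      simp only
      rw [ha'h h, smul_inv', inv_inv]
      calc (a h : A)
          = ((β * A₀ ^ N') * (β * A₀ ^ N')⁻¹) * a h *
              (((h : Γ) • (β * A₀ ^ N')) * ((h : Γ) • (β * A₀ ^ N'))⁻¹) := by group
        _ = (β * A₀ ^ N') * (a h * ((β * A₀ ^ N')⁻¹ * (h : Γ) • (β * A₀ ^ N'))) *
              ((h : Γ) • (β * A₀ ^ N'))⁻¹ := by ac_rfl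
    obtain ⟨α, hα⟩ := hA1inj a' a ha'coc hacoc hcohA
    refine ⟨b * (u * ι α), fun g => ?_⟩
    calc c' g = ι (a g) * e g := hc'eq g
      _ = (ι α)⁻¹ * (ι (a' g) * (ι (g • α) * e g)) := by
          rw [hα g, map_mul, map_mul, map_inv]; group
      _ = (ι α)⁻¹ * (ι (a' g) * (e g * ι (g • α))) := by rw [hcent (g • α) (e g)]
      _ = (ι α)⁻¹ * ((u⁻¹ * e g * (g • u) * (e g)⁻¹) * (e g * ι (g • α))) := by rw [ha' g]
      _ = (b * (u * ι α))⁻¹ * c g * g • (b * (u * ι α)) := by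
          simp only [he_def]
          rw [hιequiv, smul_mul', smul_mul']
          group
  · intro c hcoc hdel
    choose bb hbb using hdel
    -- the conjugation map
    have hconjmem : ∀ (γ : Γ) (h : H), γ⁻¹ * (h : Γ) * γ ∈ H := fun γ h => by
      simpa using (inferInstance : H.Normal).conj_mem (h : Γ) h.2 γ⁻¹
    set conj : Γ → H → H := fun γ h => ⟨γ⁻¹ * (h : Γ) * γ, hconjmem γ h⟩ with hconj_def
    have hbb' : ∀ (γ : Γ) (h : H), c h = (bb γ)⁻¹ * (γ • c (conj γ h)) * (h : Γ) • bb γ :=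
      fun γ h => hbb γ h
    -- push the cocycle to C
    have hπccoc : IsCocycleOn H (fun h : H => π (c h)) := by
      intro g h; simp only [hcoc g h, map_mul, hπequiv]
    have hπcdel : DeltaInvariant H (fun h : H => π (c h)) := by
      intro γ
      exact ⟨π (bb γ), fun h => by
        simpa only [map_mul, map_inv, hπequiv] using congrArg π (hbb' γ h)⟩
    obtain ⟨d, hdcoc, xc, hxc⟩ := hC1surj _ hπccoc hπcdel
    have hxc' : ∀ h : H, π (c h) = xc⁻¹ * d h * (h : Γ) • xc := fun h => hxc h
    obtain ⟨β, hβ⟩ := hsurj xc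
    -- the twisted cocycle v on H
    set v : H → B := fun h => β * c h * ((h : Γ) • β)⁻¹ with hv_def
    have hvcoc : IsCocycleOn H v := by
      intro g h
      simp only [hv_def]
      rw [hcoc g h, show ((g * h : H) : Γ) = (g : Γ) * (h : Γ) from rfl, mul_smul,
        smul_mul', smul_mul', smul_inv']
      group
    have hcv : ∀ h : H, c h = β⁻¹ * v h * (h : Γ) • β := by
      intro h; simp only [hv_def]; group
    have hπv : ∀ h : H, π (v h) = d h := by
      intro h
      simp only [hv_def, map_mul, map_inv, hπequiv, hβ, hxc' h]
      group
    -- set-theoretic lift of d and the 2-cocycle obstruction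
    set btil : Γ → B := fun g => Function.surjInv hsurj (d g) with hbtil_def
    have hπbtil : ∀ g : Γ, π (btil g) = d g := fun g => Function.surjInv_eq hsurj (d g)
    choose F hF using fun g h : Γ => hlift (btil g * g • btil h * (btil (g * h))⁻¹)
      (by rw [map_mul, map_mul, map_inv, hπequiv, hπbtil, hπbtil, hπbtil, hdcoc g h]; group)
    have hbF : ∀ g h : Γ, btil (g * h) = (ι (F g h))⁻¹ * (btil g * g • btil h) := by
      intro g h
      calc btil (g * h)
          = (btil g * g • btil h * (btil (g * h))⁻¹)⁻¹ * (btil g * g • btil h) := by group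
        _ = (ι (F g h))⁻¹ * (btil g * g • btil h) := by rw [← hF]
    have hF2 : Is2Cocycle F := by
      intro g h j
      apply hinj
      rw [map_mul, map_mul]
      have kR : ι (F (g * h) j) * ι (F g h)
          = btil g * g • btil h * ((g * h) • btil j) * (btil (g * (h * j)))⁻¹ := by
        calc ι (F (g * h) j) * ι (F g h)
            = ι (F g h) * ι (F (g * h) j) := (hcent _ _).symm
          _ = (btil g * g • btil h * (btil (g * h))⁻¹) *
              (btil (g * h) * ((g * h) • btil j) * (btil ((g * h) * j))⁻¹) := by
              rw [hF, hF]
          _ = btil g * g • btil h * ((g * h) • btil j) * (btil (g * (h * j)))⁻¹ := by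
              rw [mul_assoc g h j]; group
      have hFr : btil h * h • btil j = ι (F h j) * btil (h * j) := by rw [hF]; group
      have kL : ι (g • F h j) * ι (F g (h * j))
          = btil g * g • btil h * ((g * h) • btil j) * (btil (g * (h * j)))⁻¹ := by
        calc ι (g • F h j) * ι (F g (h * j))
            = ι (g • F h j) * (btil g * g • btil (h * j) * (btil (g * (h * j)))⁻¹) := by rw [hF]
          _ = btil g * (ι (g • F h j) * g • btil (h * j)) * (btil (g * (h * j)))⁻¹ := by
              rw [show ι (g • F h j) * (btil g * g • btil (h * j) * (btil (g * (h * j)))⁻¹)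
                  = (ι (g • F h j) * btil g) * (g • btil (h * j) * (btil (g * (h * j)))⁻¹) by group,
                hcent (g • F h j) (btil g)]
              group
          _ = btil g * (g • (ι (F h j) * btil (h * j))) * (btil (g * (h * j)))⁻¹ := by
              rw [smul_mul', ← hιequiv]
          _ = btil g * (g • (btil h * h • btil j)) * (btil (g * (h * j)))⁻¹ := by rw [← hFr]
          _ = btil g * g • btil h * ((g * h) • btil j) * (btil (g * (h * j)))⁻¹ := by
              rw [smul_mul', ← mul_smul]; group
      rw [kL, kR]
    -- restriction of F to H is a coboundary
    choose αb hαb using fun h : H => hlift (btil h * (v h)⁻¹)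
      (by rw [map_mul, map_inv, hπbtil, hπv]; group)
    have hbv : ∀ h : H, btil h = ι (αb h) * v h := by
      intro h; rw [hαb]; group
    have hFcob : Is2CoboundaryOn H (fun g h : H => F g h) := by
      refine ⟨αb, fun g h => ?_⟩
      apply hinj
      simp only [map_mul, map_inv, ← hιequiv]
      calc ι (F (g : Γ) (h : Γ))
          = btil (g : Γ) * (g : Γ) • btil (h : Γ) * (btil ((g : Γ) * (h : Γ)))⁻¹ := hF _ _
        _ = (ι (αb g) * v g) * ((g : Γ) • (ι (αb h) * v h)) * (ι (αb (g * h)) * v (g * h))⁻¹ := by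
            rw [← hbv g, ← hbv h, show ((g : Γ) * (h : Γ)) = ((g * h : H) : Γ) from rfl, ← hbv (g * h)]
        _ = (ι (αb g) * v g) * (ι ((g : Γ) • αb h) * (g : Γ) • v h) *
              ((v g * (g : Γ) • v h)⁻¹ * (ι (αb (g * h)))⁻¹) := by
            rw [smul_mul', ← hιequiv, mul_inv_rev, hvcoc g h]
        _ = ι (αb g) * ((v g * ι ((g : Γ) • αb h)) *
              ((g : Γ) • v h * ((g : Γ) • v h)⁻¹ * (v g)⁻¹)) * (ι (αb (g * h)))⁻¹ := by group
        _ = ι (αb g) * ((ι ((g : Γ) • αb h) * v g) *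
              ((g : Γ) • v h * ((g : Γ) • v h)⁻¹ * (v g)⁻¹)) * (ι (αb (g * h)))⁻¹ := by
            rw [hcent ((g : Γ) • αb h) (v g)]
        _ = ι (αb g) * ι ((g : Γ) • αb h) * (ι (αb (g * h)))⁻¹ := by group
    -- kill the obstruction globally
    obtain ⟨U, hU⟩ := hA2 F hF2 hFcob
    -- the global cocycle b' lifting d
    set b' : Γ → B := fun g => (ι (U g))⁻¹ * btil g with hb'_def
    have hcentinv : ∀ (α : A) (y : B), (ι α)⁻¹ * y = y * (ι α)⁻¹ := fun α y => by
      rw [← map_inv]; exact hcent _ y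
    have hb'coc : IsCocycle b' := by
      intro g h
      simp only [hb'_def]
      rw [smul_mul', smul_inv', ← hιequiv]
      calc (ι (U (g * h)))⁻¹ * btil (g * h)
          = (ι (U (g * h)))⁻¹ * ((ι (F g h))⁻¹ * (btil g * g • btil h)) := by rw [hbF]
        _ = (ι (U (g * h)))⁻¹ * ((ι (U g) * ι (g • U h) * (ι (U (g * h)))⁻¹)⁻¹ *
              (btil g * g • btil h)) := by
            rw [hU g h, map_mul, map_mul, map_inv]
        _ = (ι (g • U h))⁻¹ * ((ι (U g))⁻¹ * btil g) * (g • btil h) := by group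
        _ = ((ι (U g))⁻¹ * btil g) * ((ι (g • U h))⁻¹ * g • btil h) := by
            rw [hcentinv (g • U h) ((ι (U g))⁻¹ * btil g)]; group
    have hπb' : ∀ g : Γ, π (b' g) = d g := by
      intro g
      simp only [hb'_def, map_mul, map_inv, hπι, hπbtil, inv_one, one_mul]
    -- the defect a₀ on H
    choose a₀ ha₀ using fun h : H => hlift (b' h * (v h)⁻¹)
      (by rw [map_mul, map_inv, hπb', hπv]; group)
    have hb'v : ∀ h : H, b' h = ι (a₀ h) * v h := by
      intro h; rw [ha₀]; group
    have ha₀coc : IsCocycleOn H a₀ := by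
      intro g h
      apply hinj
      rw [map_mul]
      calc ι (a₀ (g * h)) = b' ((g * h : H) : Γ) * (v (g * h))⁻¹ := ha₀ _
        _ = (ι (a₀ g) * v g) * (ι ((g : Γ) • a₀ h) * (g : Γ) • v h) * (v g * (g : Γ) • v h)⁻¹ := by
            rw [show (((g * h : H) : Γ)) = (g : Γ) * (h : Γ) from rfl, hb'coc (g : Γ) (h : Γ),
              hvcoc g h, hb'v g, hb'v h, smul_mul', ← hιequiv]
        _ = ι (a₀ g) * ι ((g : Γ) • a₀ h) := MyAux.central_collect _ _ _ _ (hcent _)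
    -- Δ-twists of a₀
    set t : Γ → H → A := fun γ h => γ • a₀ (conj γ h) with ht_def
    have hγv : ∀ (γ : Γ) (h : H), γ • v (conj γ h)
        = ((γ • β) * bb γ * β⁻¹) * v h * ((h : Γ) • ((γ • β) * bb γ * β⁻¹))⁻¹ := by
      intro γ h
      have h1 : γ • c (conj γ h) = bb γ * c h * ((h : Γ) • bb γ)⁻¹ := by
        rw [hbb' γ h]; group
      have h2 : γ • ((conj γ h : Γ) • β) = (h : Γ) • (γ • β) := by
        rw [← mul_smul, ← mul_smul]
        congr 1
        show γ * (γ⁻¹ * (h : Γ) * γ) = (h : Γ) * γ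
        group
      calc γ • v (conj γ h)
          = γ • β * (γ • c (conj γ h)) * (γ • ((conj γ h : Γ) • β))⁻¹ := by
            simp only [hv_def]
            rw [smul_mul', smul_mul', smul_inv']
        _ = γ • β * (bb γ * (β⁻¹ * v h * (h : Γ) • β) * ((h : Γ) • bb γ)⁻¹) *
              ((h : Γ) • (γ • β))⁻¹ := by rw [h1, h2, ← hcv h]
        _ = ((γ • β) * bb γ * β⁻¹) * v h * ((h : Γ) • ((γ • β) * bb γ * β⁻¹))⁻¹ := by
            rw [smul_mul', smul_mul', smul_inv']
            group
    have hb'conj : ∀ (γ : Γ) (h : H), γ • b' (γ⁻¹ * (h : Γ) * γ)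
        = (b' γ)⁻¹ * (b' (h : Γ) * (h : Γ) • b' γ) :=
      fun γ h => MyAux.cocycle_conj hb'coc γ (h : Γ)
    have hφn : ∀ (γ : Γ) (h : H),
        (b' γ * ((γ • β) * bb γ * β⁻¹))⁻¹ * v h *
          ((h : Γ) • (b' γ * ((γ • β) * bb γ * β⁻¹))) * (v h)⁻¹
        = ι (t γ h * (a₀ h)⁻¹) := by
      intro γ h
      have hstep : ι (t γ h) * (ι (a₀ h))⁻¹
          = (b' γ)⁻¹ * (v h * ((h : Γ) • (b' γ * ((γ • β) * bb γ * β⁻¹))) * (v h)⁻¹) *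
            ((γ • β) * bb γ * β⁻¹)⁻¹ := by
        calc ι (t γ h) * (ι (a₀ h))⁻¹
            = γ • ι (a₀ (conj γ h)) * (ι (a₀ h))⁻¹ := by
              simp only [ht_def]; rw [hιequiv]
          _ = γ • (b' (γ⁻¹ * (h : Γ) * γ) * (v (conj γ h))⁻¹) * (ι (a₀ h))⁻¹ := by
              rw [ha₀ (conj γ h), show ((conj γ h : H) : Γ) = γ⁻¹ * (h : Γ) * γ from rfl]
          _ = (γ • b' (γ⁻¹ * (h : Γ) * γ)) * (γ • v (conj γ h))⁻¹ * (ι (a₀ h))⁻¹ := by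
              rw [smul_mul', smul_inv']
          _ = ((b' γ)⁻¹ * (b' (h : Γ) * (h : Γ) • b' γ)) *
                (((γ • β) * bb γ * β⁻¹) * v h * ((h : Γ) • ((γ • β) * bb γ * β⁻¹))⁻¹)⁻¹ *
                (ι (a₀ h))⁻¹ := by
              rw [hb'conj γ h, hγv γ h]
          _ = (b' γ)⁻¹ * (ι (a₀ h) * (v h * ((h : Γ) • b' γ * (h : Γ) • ((γ • β) * bb γ * β⁻¹)) *
                (v h)⁻¹ * ((γ • β) * bb γ * β⁻¹)⁻¹)) * (ι (a₀ h))⁻¹ := by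
              rw [hb'v h]; group
          _ = (b' γ)⁻¹ * ((v h * ((h : Γ) • b' γ * (h : Γ) • ((γ • β) * bb γ * β⁻¹)) *
                (v h)⁻¹ * ((γ • β) * bb γ * β⁻¹)⁻¹) * ι (a₀ h)) * (ι (a₀ h))⁻¹ := by
              rw [hcent]
          _ = (b' γ)⁻¹ * (v h * ((h : Γ) • (b' γ * ((γ • β) * bb γ * β⁻¹))) * (v h)⁻¹) *
                ((γ • β) * bb γ * β⁻¹)⁻¹ := by
              rw [smul_mul' ((h : Γ)) (b' γ) ((γ • β) * bb γ * β⁻¹)]; group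
      calc (b' γ * ((γ • β) * bb γ * β⁻¹))⁻¹ * v h *
            ((h : Γ) • (b' γ * ((γ • β) * bb γ * β⁻¹))) * (v h)⁻¹
          = ((γ • β) * bb γ * β⁻¹)⁻¹ *
              ((b' γ)⁻¹ * (v h * ((h : Γ) • (b' γ * ((γ • β) * bb γ * β⁻¹))) * (v h)⁻¹) *
                ((γ • β) * bb γ * β⁻¹)⁻¹) * ((γ • β) * bb γ * β⁻¹) := by group
        _ = ((γ • β) * bb γ * β⁻¹)⁻¹ * (ι (t γ h) * (ι (a₀ h))⁻¹) * ((γ • β) * bb γ * β⁻¹) := by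
            rw [← hstep]
        _ = ((γ • β) * bb γ * β⁻¹)⁻¹ * ι (t γ h * (a₀ h)⁻¹) * ((γ • β) * bb γ * β⁻¹) := by
            rw [map_mul, map_inv]
        _ = ((γ • β) * bb γ * β⁻¹)⁻¹ * (ι (t γ h * (a₀ h)⁻¹) * ((γ • β) * bb γ * β⁻¹)) := by
            group
        _ = ((γ • β) * bb γ * β⁻¹)⁻¹ * (((γ • β) * bb γ * β⁻¹) * ι (t γ h * (a₀ h)⁻¹)) := by
            rw [hcent]
        _ = ι (t γ h * (a₀ h)⁻¹) := by group
    -- t γ is a cocycle on H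
    have htcoc : ∀ γ : Γ, IsCocycleOn H (t γ) := by
      intro γ g h
      have hcm : conj γ (g * h) = conj γ g * conj γ h := Subtype.ext (by
        show γ⁻¹ * ((g : Γ) * (h : Γ)) * γ = (γ⁻¹ * (g : Γ) * γ) * (γ⁻¹ * (h : Γ) * γ)
        group)
      simp only [ht_def]
      rw [hcm, ha₀coc (conj γ g) (conj γ h), smul_mul', ← mul_smul,
        show γ * ((conj γ g : H) : Γ) = (g : Γ) * γ from by
          show γ * (γ⁻¹ * (g : Γ) * γ) = (g : Γ) * γ; group,
        mul_smul]
    -- coset dependence of t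
    have hconjcoset : ∀ (γ : Γ) (h₀ h : H),
        t (γ * (h₀ : Γ)) h = t γ h * ((γ • a₀ h₀)⁻¹ * (h : Γ) • (γ • a₀ h₀)) := by
      intro γ h₀ h
      have hc2 : conj (γ * (h₀ : Γ)) h = h₀⁻¹ * conj γ h * h₀ := Subtype.ext (by
        show (γ * (h₀ : Γ))⁻¹ * (h : Γ) * (γ * (h₀ : Γ))
          = ((h₀ : Γ))⁻¹ * (γ⁻¹ * (h : Γ) * γ) * (h₀ : Γ)
        group)
      simp only [ht_def]
      rw [hc2, mul_smul, MyAux.cocycleOn_conj ha₀coc h₀ (conj γ h), smul_mul', smul_mul',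
        smul_inv', ← mul_smul γ ((conj γ h : H) : Γ),
        show γ * ((conj γ h : H) : Γ) = (h : Γ) * γ from by
          show γ * (γ⁻¹ * (h : Γ) * γ) = (h : Γ) * γ; group,
        mul_smul]
      ac_rfl
    -- the averaged cocycle a₁
    set a₁ : H → A := fun h => (∏ q : Γ ⧸ H, t (Quotient.out q) h) ^ N' with ha₁_def
    have ha₁coc : IsCocycleOn H a₁ := by
      intro g h
      simp only [ha₁_def]
      have h2 : (∏ q : Γ ⧸ H, (g : Γ) • t (Quotient.out q) h)
          = (g : Γ) • ∏ q : Γ ⧸ H, t (Quotient.out q) h :=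
        (map_prod (MulDistribMulAction.toMonoidHom A ((g : Γ))) _ _).symm
      have hsplit : (∏ q : Γ ⧸ H, t (Quotient.out q) (g * h))
          = (∏ q : Γ ⧸ H, t (Quotient.out q) g) *
            ((g : Γ) • ∏ q : Γ ⧸ H, t (Quotient.out q) h) := by
        rw [← h2, ← Finset.prod_mul_distrib]
        exact Finset.prod_congr rfl (fun q _ => htcoc (Quotient.out q) g h)
      rw [hsplit, mul_pow, smul_pow']
    have hdel₁ : DeltaInvariant H a₁ := by
      intro γ₀
      have hδ : ∀ q : Γ ⧸ H, (γ₀ * Quotient.out q)⁻¹ * Quotient.out (γ₀ • q) ∈ H := by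
        intro q
        apply QuotientGroup.eq.mp
        rw [QuotientGroup.out_eq' (γ₀ • q)]
        show γ₀ • (QuotientGroup.mk (Quotient.out q) : Γ ⧸ H) = γ₀ • q
        rw [QuotientGroup.out_eq' q]
      set W0 : A := ∏ q : Γ ⧸ H, ((γ₀ * Quotient.out q) •
          a₀ ⟨(γ₀ * Quotient.out q)⁻¹ * Quotient.out (γ₀ • q), hδ q⟩) with hW0_def
      refine ⟨W0 ^ N', fun h => ?_⟩
      show a₁ h = (W0 ^ N')⁻¹ * (γ₀ • a₁ (conj γ₀ h)) * (h : Γ) • W0 ^ N'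
      have e1 : γ₀ • a₁ (conj γ₀ h) = (∏ q : Γ ⧸ H, t (γ₀ * Quotient.out q) h) ^ N' := by
        simp only [ha₁_def]
        rw [smul_pow']
        congr 1
        have hm : γ₀ • ∏ q : Γ ⧸ H, t (Quotient.out q) (conj γ₀ h)
            = ∏ q : Γ ⧸ H, γ₀ • t (Quotient.out q) (conj γ₀ h) :=
          map_prod (MulDistribMulAction.toMonoidHom A γ₀) _ _
        rw [hm]
        refine Finset.prod_congr rfl (fun q _ => ?_)
        simp only [ht_def]
        rw [← mul_smul]
        rw [show conj (Quotient.out q) (conj γ₀ h) = conj (γ₀ * Quotient.out q) h from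
          Subtype.ext (by
            show (Quotient.out q)⁻¹ * (γ₀⁻¹ * (h : Γ) * γ₀) * Quotient.out q
              = (γ₀ * Quotient.out q)⁻¹ * (h : Γ) * (γ₀ * Quotient.out q)
            group)]
      have h4 : ∀ q : Γ ⧸ H, t (Quotient.out (γ₀ • q)) h
          = t (γ₀ * Quotient.out q) h *
            (((γ₀ * Quotient.out q) • a₀ ⟨(γ₀ * Quotient.out q)⁻¹ * Quotient.out (γ₀ • q), hδ q⟩)⁻¹ *
              (h : Γ) • ((γ₀ * Quotient.out q) •
                a₀ ⟨(γ₀ * Quotient.out q)⁻¹ * Quotient.out (γ₀ • q), hδ q⟩)) := by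
        intro q
        have h3 : (γ₀ * Quotient.out q) *
            ((⟨(γ₀ * Quotient.out q)⁻¹ * Quotient.out (γ₀ • q), hδ q⟩ : H) : Γ)
            = Quotient.out (γ₀ • q) := by
          show (γ₀ * Quotient.out q) * ((γ₀ * Quotient.out q)⁻¹ * Quotient.out (γ₀ • q)) = _
          group
        have h4q := hconjcoset (γ₀ * Quotient.out q)
          ⟨(γ₀ * Quotient.out q)⁻¹ * Quotient.out (γ₀ • q), hδ q⟩ h
        rw [h3] at h4q
        exact h4q
      have h5 : ∏ q : Γ ⧸ H, t (Quotient.out (γ₀ • q)) h = ∏ q : Γ ⧸ H, t (Quotient.out q) h :=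
        Fintype.prod_equiv (MulAction.toPerm (β := Γ ⧸ H) γ₀) _ _
          (fun q => by rw [MulAction.toPerm_apply])
      have hR : (∏ q : Γ ⧸ H, t (γ₀ * Quotient.out q) h) * (W0⁻¹ * (h : Γ) • W0)
          = ∏ q : Γ ⧸ H, t (Quotient.out q) h := by
        have hw2 : (h : Γ) • W0 = ∏ q : Γ ⧸ H, (h : Γ) • ((γ₀ * Quotient.out q) •
            a₀ ⟨(γ₀ * Quotient.out q)⁻¹ * Quotient.out (γ₀ • q), hδ q⟩) := by
          rw [hW0_def]
          exact map_prod (MulDistribMulAction.toMonoidHom A ((h : Γ))) _ _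
        calc (∏ q : Γ ⧸ H, t (γ₀ * Quotient.out q) h) * (W0⁻¹ * (h : Γ) • W0)
            = ∏ q : Γ ⧸ H, (t (γ₀ * Quotient.out q) h *
                (((γ₀ * Quotient.out q) • a₀ ⟨(γ₀ * Quotient.out q)⁻¹ *
                    Quotient.out (γ₀ • q), hδ q⟩)⁻¹ *
                  (h : Γ) • ((γ₀ * Quotient.out q) •
                    a₀ ⟨(γ₀ * Quotient.out q)⁻¹ * Quotient.out (γ₀ • q), hδ q⟩))) := by
              rw [Finset.prod_mul_distrib, Finset.prod_mul_distrib, ← Finset.prod_inv_distrib,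
                ← hw2, hW0_def]
          _ = ∏ q : Γ ⧸ H, t (Quotient.out (γ₀ • q)) h :=
              Finset.prod_congr rfl (fun q _ => (h4 q).symm)
          _ = ∏ q : Γ ⧸ H, t (Quotient.out q) h := h5
      calc a₁ h = ((∏ q : Γ ⧸ H, t (γ₀ * Quotient.out q) h) * (W0⁻¹ * (h : Γ) • W0)) ^ N' := by
            simp only [ha₁_def]; rw [hR]
        _ = (W0 ^ N')⁻¹ * ((∏ q : Γ ⧸ H, t (γ₀ * Quotient.out q) h) ^ N') * (h : Γ) • W0 ^ N' := by
            simp only [mul_pow, inv_pow, smul_pow']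
            ac_rfl
        _ = (W0 ^ N')⁻¹ * (γ₀ • a₁ (conj γ₀ h)) * (h : Γ) • W0 ^ N' := by rw [← e1]
    -- apply H¹(−,A)-surjectivity to a₁
    obtain ⟨eA, heAcoc, α₂, hα₂⟩ := hA1surj a₁ ha₁coc hdel₁
    have hα₂' : ∀ h : H, a₁ h = α₂⁻¹ * eA h * (h : Γ) • α₂ := fun h => hα₂ h
    -- transversal list and the correction element Pn
    set lG : List Γ := (Finset.univ : Finset (Γ ⧸ H)).toList.map Quotient.out with hlG_def
    have hlen : lG.length = H.index := by
      rw [hlG_def, List.length_map, Finset.length_toList, Finset.card_univ, hidxcard]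
      rfl
    set Pn : B := ((lG.map (fun γ => b' γ * ((γ • β) * bb γ * β⁻¹))).prod) ^ N' with hPn_def
    set SP : H → A := fun h => ((lG.map (fun γ => t γ h)).prod * ((a₀ h) ^ H.index)⁻¹) ^ N'
      with hSP_def
    have hSS : ∀ h : H, (lG.map (fun γ => t γ h * (a₀ h)⁻¹)).prod
        = (lG.map (fun γ => t γ h)).prod * ((a₀ h) ^ H.index)⁻¹ := by
      intro h
      rw [MyAux.list_mul_const (fun γ => t γ h) ((a₀ h)⁻¹) lG, hlen, inv_pow]
    have hφ0 : ∀ h : H, ((lG.map (fun γ => b' γ * ((γ • β) * bb γ * β⁻¹))).prod)⁻¹ * v h *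
        ((h : Γ) • (lG.map (fun γ => b' γ * ((γ • β) * bb γ * β⁻¹))).prod) * (v h)⁻¹
        = ι ((lG.map (fun γ => t γ h)).prod * ((a₀ h) ^ H.index)⁻¹) := by
      intro h
      have hl := MyAux.phi_list (H := H) ι hcent v
        (lG.map (fun γ => (b' γ * ((γ • β) * bb γ * β⁻¹), fun h : H => t γ h * (a₀ h)⁻¹)))
        (fun nf hnf h0 => by
          obtain ⟨γ, _, rfl⟩ := List.mem_map.mp hnf
          exact hφn γ h0) h
      simp only [List.map_map, Function.comp_def] at hl
      rw [← hSS h]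
      exact hl
    have hφPn : ∀ h : H, Pn⁻¹ * v h * ((h : Γ) • Pn) * (v h)⁻¹ = ι (SP h) := by
      intro h
      have hl := MyAux.phi_list (H := H) ι hcent v
        (List.replicate N' ((lG.map (fun γ => b' γ * ((γ • β) * bb γ * β⁻¹))).prod,
          fun h : H => (lG.map (fun γ => t γ h)).prod * ((a₀ h) ^ H.index)⁻¹))
        (fun nf hnf h0 => by
          rw [List.eq_of_mem_replicate hnf]
          exact hφ0 h0) h
      simpa only [List.map_replicate, List.prod_replicate, hSP_def, hPn_def] using hl
    have hlprod : ∀ h : H, (lG.map (fun γ => t γ h)).prod = ∏ q : Γ ⧸ H, t (Quotient.out q) h := by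
      intro h
      rw [hlG_def, List.map_map, ← Finset.prod_map_toList]
      simp only [Function.comp_def]
      rfl
    -- the final cocycle
    set bfin : Γ → B := fun g => (ι (eA g))⁻¹ * b' g with hbfin_def
    have hbfincoc : IsCocycle bfin := by
      intro g h
      simp only [hbfin_def]
      rw [smul_mul', smul_inv', ← hιequiv]
      calc (ι (eA (g * h)))⁻¹ * b' (g * h)
          = (ι (eA g) * ι (g • eA h))⁻¹ * (b' g * g • b' h) := by
            rw [heAcoc g h, hb'coc g h, map_mul]
        _ = (ι (g • eA h))⁻¹ * ((ι (eA g))⁻¹ * b' g) * (g • b' h) := by group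
        _ = ((ι (eA g))⁻¹ * b' g) * ((ι (g • eA h))⁻¹ * g • b' h) := by
            rw [hcentinv (g • eA h) ((ι (eA g))⁻¹ * b' g)]; group
    refine ⟨bfin, hbfincoc, (Pn * (ι α₂)⁻¹) * β, fun h => ?_⟩
    show c h = ((Pn * (ι α₂)⁻¹) * β)⁻¹ * bfin h * (h : Γ) • ((Pn * (ι α₂)⁻¹) * β)
    have heAh : eA h = a₀ h * (SP h * (α₂ * ((h : Γ) • α₂)⁻¹)) := by
      have h6 : eA (h : Γ) = a₁ h * (α₂ * ((h : Γ) • α₂)⁻¹) := by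
        rw [hα₂' h]
        calc eA (h : Γ)
            = ((α₂⁻¹ * α₂) * eA (h : Γ)) * (((h : Γ) • α₂) * ((h : Γ) • α₂)⁻¹) := by group
          _ = α₂⁻¹ * eA (h : Γ) * (h : Γ) • α₂ * (α₂ * ((h : Γ) • α₂)⁻¹) := by ac_rfl
      rw [h6, show a₁ h = ((lG.map (fun γ => t γ h)).prod) ^ N' from by
        simp only [ha₁_def]; rw [hlprod h]]
      simp only [hSP_def]
      rw [mul_pow, inv_pow, ← pow_mul, hNN' (a₀ h)]
      calc ((lG.map (fun γ => t γ h)).prod) ^ N' * (α₂ * ((h : Γ) • α₂)⁻¹)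
          = (a₀ h * (a₀ h)⁻¹) * (((lG.map (fun γ => t γ h)).prod) ^ N' * (α₂ * ((h : Γ) • α₂)⁻¹)) := by
            group
        _ = a₀ h * (((lG.map (fun γ => t γ h)).prod) ^ N' * (a₀ h)⁻¹ * (α₂ * ((h : Γ) • α₂)⁻¹)) := by
            ac_rfl
    have hbfinh : bfin (h : Γ) = ι ((eA h)⁻¹ * a₀ h) * v h := by
      simp only [hbfin_def]
      rw [hb'v h, map_mul, map_inv]
      group
    have hz : (eA h)⁻¹ * a₀ h = (SP h)⁻¹ * (α₂⁻¹ * ((h : Γ) • α₂)) := by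
      rw [heAh]
      calc (a₀ h * (SP h * (α₂ * ((h : Γ) • α₂)⁻¹)))⁻¹ * a₀ h
          = ((h : Γ) • α₂) * α₂⁻¹ * (SP h)⁻¹ := by group
        _ = (SP h)⁻¹ * (α₂⁻¹ * ((h : Γ) • α₂)) := by ac_rfl
    have hPv : Pn⁻¹ * v h * ((h : Γ) • Pn) = ι (SP h) * v h := by
      calc Pn⁻¹ * v h * ((h : Γ) • Pn)
          = (Pn⁻¹ * v h * ((h : Γ) • Pn) * (v h)⁻¹) * v h := by group
        _ = ι (SP h) * v h := by rw [hφPn h]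
    have hone : α₂ * ((eA h)⁻¹ * a₀ h * (SP h * ((h : Γ) • α₂)⁻¹)) = 1 := by
      rw [hz]
      calc α₂ * ((SP h)⁻¹ * (α₂⁻¹ * ((h : Γ) • α₂)) * (SP h * ((h : Γ) • α₂)⁻¹))
          = (α₂ * α₂⁻¹) * (((SP h)⁻¹ * SP h) * (((h : Γ) • α₂) * ((h : Γ) • α₂)⁻¹)) := by ac_rfl
        _ = 1 := by group
    rw [hbfinh, hcv h]
    refine Eq.symm ?_
    calc ((Pn * (ι α₂)⁻¹) * β)⁻¹ * (ι ((eA h)⁻¹ * a₀ h) * v h) * ((h : Γ) • ((Pn * (ι α₂)⁻¹) * β))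
        = β⁻¹ * (ι α₂ * ((Pn⁻¹ * ι ((eA h)⁻¹ * a₀ h)) *
            (v h * (((h : Γ) • Pn) * (((h : Γ) • ι α₂)⁻¹ * ((h : Γ) • β)))))) := by
          rw [smul_mul' ((h : Γ)) (Pn * (ι α₂)⁻¹) β, smul_mul' ((h : Γ)) Pn ((ι α₂)⁻¹),
            smul_inv']
          group
      _ = β⁻¹ * (ι α₂ * ((ι ((eA h)⁻¹ * a₀ h) * Pn⁻¹) *
            (v h * (((h : Γ) • Pn) * (((h : Γ) • ι α₂)⁻¹ * ((h : Γ) • β)))))) := by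
          rw [← hcent ((eA h)⁻¹ * a₀ h) Pn⁻¹]
      _ = β⁻¹ * (ι α₂ * (ι ((eA h)⁻¹ * a₀ h) *
            ((Pn⁻¹ * v h * ((h : Γ) • Pn)) * (((h : Γ) • ι α₂)⁻¹ * ((h : Γ) • β))))) := by
          group
      _ = β⁻¹ * (ι α₂ * (ι ((eA h)⁻¹ * a₀ h) *
            ((ι (SP h) * v h) * ((ι ((h : Γ) • α₂))⁻¹ * ((h : Γ) • β))))) := by
          rw [hPv, ← hιequiv]
      _ = β⁻¹ * ((ι α₂ * (ι ((eA h)⁻¹ * a₀ h) * ι (SP h))) *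
            ((v h * (ι ((h : Γ) • α₂))⁻¹) * ((h : Γ) • β))) := by group
      _ = β⁻¹ * ((ι α₂ * (ι ((eA h)⁻¹ * a₀ h) * ι (SP h))) *
            (((ι ((h : Γ) • α₂))⁻¹ * v h) * ((h : Γ) • β))) := by
          rw [hcentinv ((h : Γ) • α₂) (v h)]
      _ = β⁻¹ * ((ι α₂ * (ι ((eA h)⁻¹ * a₀ h) * (ι (SP h) * (ι ((h : Γ) • α₂))⁻¹))) *
            (v h * ((h : Γ) • β))) := by group
      _ = β⁻¹ * (ι (α₂ * ((eA h)⁻¹ * a₀ h * (SP h * ((h : Γ) • α₂)⁻¹))) *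
            (v h * ((h : Γ) • β))) := by
          simp only [map_mul, map_inv]
      _ = β⁻¹ * v h * ((h : Γ) • β) := by
          rw [hone, map_one]
          group
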